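/- For every k with 9 ≤ k ≤ 17 and every k-uniform hypergraph H with n vertices and m edges, 100·τ(H) ≤ 9.5976·n₁ + 14.8298·n₂ + 16.1586·n₃ + (50/3)·n₍≥4₎ + (50/3)·m, where nᵢ is the number of vertices of degree i and n₍≥4₎ the number of vertices of degree at least 4. -/
import Mathlib

variable {α : Type*} [DecidableEq α]

/-- A transversal of an edge set: meets every edge. -/
def IsTransversal (E : Finset (Finset α)) (T : Finset α) : Prop :=
  ∀ e ∈ E, (e ∩ T).Nonempty

/-- Transversal number: minimum cardinality of a transversal. -/
noncomputable def tau (E : Finset (Finset α)) : ℕ :=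
  sInf {n | ∃ T : Finset α, T.card = n ∧ IsTransversal E T}

/-- Degree of a vertex: number of edges containing it. -/
def degree (E : Finset (Finset α)) (v : α) : ℕ :=
  (E.filter (fun e => v ∈ e)).card

/-- Neighborhood of a vertex. -/
def nbhd (E : Finset (Finset α)) (v : α) : Finset α :=
  ((E.filter (fun e => v ∈ e)).biUnion id).erase v

open Finset

/-- weight function -/
noncomputable def Wt : ℕ → ℝ
  | 0 => 0
  | 1 => 9.5976
  | 2 => 14.8298
  | 3 => 16.1586
  | _ + 4 => 50/3

lemma Wt_of_ge4 {d : ℕ} (hd : 4 ≤ d) : Wt d = 50/3 := by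
  obtain ⟨c, rfl⟩ := Nat.exists_eq_add_of_le hd
  rw [Nat.add_comm]; rfl

lemma Wt_nonneg (d : ℕ) : 0 ≤ Wt d := by
  match d with
  | 0 => norm_num [Wt]
  | 1 => norm_num [Wt]
  | 2 => norm_num [Wt]
  | 3 => norm_num [Wt]
  | (n+4) => norm_num [Wt]

lemma Wt_mono {a b : ℕ} (h : a ≤ b) : Wt a ≤ Wt b := by
  rcases le_or_gt 4 a with ha | ha
  · rw [Wt_of_ge4 ha, Wt_of_ge4 (ha.trans h)]
  · rcases le_or_gt 4 b with hb | hb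
    · rw [Wt_of_ge4 hb]
      interval_cases a <;> norm_num [Wt]
    · interval_cases a <;> interval_cases b <;> norm_num [Wt]

def supp (E : Finset (Finset α)) : Finset α := E.biUnion id

noncomputable def Psi (E : Finset (Finset α)) : ℝ :=
  ∑ v ∈ supp E, Wt (degree E v) + (50/3) * E.card

lemma mem_supp {E : Finset (Finset α)} {v : α} :
    v ∈ supp E ↔ ∃ e ∈ E, v ∈ e := by simp [supp]

lemma subset_supp {E : Finset (Finset α)} {e : Finset α} (he : e ∈ E) : e ⊆ supp E :=
  fun v hv => mem_supp.2 ⟨e, he, hv⟩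

lemma degree_pos_iff {E : Finset (Finset α)} {v : α} :
    1 ≤ degree E v ↔ v ∈ supp E := by
  simp [degree, Nat.lt_iff_add_one_le.symm, Finset.card_pos, Finset.filter_nonempty_iff,
    mem_supp]

lemma degree_eq_zero_of_notMem_supp {E : Finset (Finset α)} {v : α} (h : v ∉ supp E) :
    degree E v = 0 := by
  by_contra hne
  exact h (degree_pos_iff.1 (Nat.one_le_iff_ne_zero.2 hne))
-- tau lemmas
lemma tau_le_of_transversal {E : Finset (Finset α)} {T : Finset α}
    (hT : IsTransversal E T) : tau E ≤ T.card :=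
  Nat.sInf_le ⟨T, rfl, hT⟩

lemma supp_transversal {E : Finset (Finset α)} (hE : ∀ e ∈ E, e.Nonempty) :
    IsTransversal E (supp E) := by
  intro e he
  obtain ⟨x, hx⟩ := hE e he
  exact ⟨x, Finset.mem_inter.2 ⟨hx, subset_supp he hx⟩⟩

lemma exists_tau_transversal {E : Finset (Finset α)} (hE : ∀ e ∈ E, e.Nonempty) :
    ∃ T : Finset α, T.card = tau E ∧ IsTransversal E T := by
  have hne : {n | ∃ T : Finset α, T.card = n ∧ IsTransversal E T}.Nonempty :=
    ⟨(supp E).card, supp E, rfl, supp_transversal hE⟩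
  exact Nat.sInf_mem hne

lemma tau_empty : tau (∅ : Finset (Finset α)) = 0 :=
  Nat.le_zero.1 (tau_le_of_transversal (T := ∅) (fun e he => absurd he (by simp)))

lemma tau_step {E : Finset (Finset α)} (hE : ∀ e ∈ E, e.Nonempty) (v : α) :
    tau E ≤ tau (E.filter (fun e => v ∉ e)) + 1 := by
  have hE' : ∀ e ∈ E.filter (fun e => v ∉ e), e.Nonempty :=
    fun e he => hE e (Finset.mem_filter.1 he).1
  obtain ⟨T, hTcard, hT⟩ := exists_tau_transversal hE'
  have htrans : IsTransversal E (insert v T) := by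
    intro e he
    by_cases hv : v ∈ e
    · exact ⟨v, Finset.mem_inter.2 ⟨hv, Finset.mem_insert_self v T⟩⟩
    · obtain ⟨x, hx⟩ := hT e (Finset.mem_filter.2 ⟨he, hv⟩)
      rw [Finset.mem_inter] at hx
      exact ⟨x, Finset.mem_inter.2 ⟨hx.1, Finset.mem_insert_of_mem hx.2⟩⟩
  calc tau E ≤ (insert v T).card := tau_le_of_transversal htrans
    _ ≤ T.card + 1 := Finset.card_insert_le v T
    _ = tau (E.filter (fun e => v ∉ e)) + 1 := by rw [hTcard]

-- degree lemmas
lemma degree_split (E : Finset (Finset α)) (v w : α) :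
    degree E w = degree (E.filter (fun e => v ∈ e)) w
      + degree (E.filter (fun e => v ∉ e)) w := by
  unfold degree
  rw [Finset.filter_comm, Finset.filter_comm (fun e => v ∉ e)]
  exact (Finset.card_filter_add_card_filter_not (s := E.filter (fun e => w ∈ e))
    (p := fun e => v ∈ e)).symm

lemma degree_le_of_subset {E F : Finset (Finset α)} (h : F ⊆ E) (w : α) :
    degree F w ≤ degree E w :=
  Finset.card_le_card (Finset.filter_subset_filter _ h)

lemma degree_filter_mem_self (E : Finset (Finset α)) (v : α) :
    degree (E.filter (fun e => v ∈ e)) v = degree E v := by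
  unfold degree
  rw [Finset.filter_filter]
  congr 1
  apply Finset.filter_congr
  intro e _; simp

lemma degree_filter_notMem_self (E : Finset (Finset α)) (v : α) :
    degree (E.filter (fun e => v ∉ e)) v = 0 := by
  unfold degree
  rw [Finset.card_eq_zero, Finset.filter_filter, Finset.filter_eq_empty_iff]
  intro e _; simp only [not_and]
  exact fun h h' => h h'

lemma sum_degree {k : ℕ} {F : Finset (Finset α)} (hU : ∀ e ∈ F, e.card = k)
    {S : Finset α} (hS : ∀ e ∈ F, e ⊆ S) :
    ∑ w ∈ S, degree F w = k * F.card := by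
  unfold degree
  have h1 : ∀ w ∈ S, (F.filter (fun e => w ∈ e)).card = ∑ e ∈ F, if w ∈ e then 1 else 0 := by
    intro w _
    rw [Finset.sum_boole, Nat.cast_id]
  rw [Finset.sum_congr rfl h1, Finset.sum_comm]
  have h2 : ∀ e ∈ F, (∑ w ∈ S, if w ∈ e then 1 else 0) = k := by
    intro e he
    rw [Finset.sum_boole, Nat.cast_id, Finset.filter_mem_eq_inter,
      Finset.inter_eq_right.2 (hS e he), hU e he]
  rw [Finset.sum_congr rfl h2, Finset.sum_const, smul_eq_mul, Nat.mul_comm]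
-- marginal lemmas
lemma marg {cap a b : ℕ} (hcap1 : 1 ≤ cap) (hcap : cap ≤ 4) (ha : a ≤ cap) (hb : b ≤ a) :
    ((a : ℝ) - b) * (Wt cap - Wt (cap - 1)) ≤ Wt a - Wt b := by
  interval_cases cap <;> interval_cases a <;> interval_cases b <;> norm_num [Wt]

lemma marg_res {d a b : ℕ} (hd : d = 3 ∨ d = 4) (ha : a ≤ d) (hb : b < a)
    (hx : ¬(a = d ∧ b + 1 = d)) :
    ((a : ℝ) - b) * (Wt d - Wt (d - 1)) + ((Wt (d - 1) - Wt (d - 2)) - (Wt d - Wt (d - 1)))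
      ≤ Wt a - Wt b := by
  rcases hd with rfl | rfl <;> interval_cases a <;> interval_cases b <;>
    simp_all <;> norm_num [Wt]

lemma supp_filter_subset (E : Finset (Finset α)) (p : Finset α → Prop) [DecidablePred p] :
    supp (E.filter p) ⊆ supp E := by
  apply Finset.biUnion_subset_biUnion_of_subset_left
  exact Finset.filter_subset _ _

lemma psi_drop (E : Finset (Finset α)) (v : α) :
    Psi E - Psi (E.filter (fun e => v ∉ e)) =
      (50/3) * (degree E v : ℝ)
      + ∑ w ∈ supp E, (Wt (degree E w) - Wt (degree (E.filter (fun e => v ∉ e)) w)) := by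
  have hsum : ∑ w ∈ supp (E.filter (fun e => v ∉ e)),
        Wt (degree (E.filter (fun e => v ∉ e)) w)
      = ∑ w ∈ supp E, Wt (degree (E.filter (fun e => v ∉ e)) w) := by
    apply Finset.sum_subset (supp_filter_subset E _)
    intro w _ hnw
    rw [degree_eq_zero_of_notMem_supp hnw]
    simp [Wt]
  have hcard : (E.filter (fun e => v ∉ e)).card + degree E v = E.card := by
    unfold degree
    rw [Nat.add_comm]
    exact Finset.card_filter_add_card_filter_not (p := fun e => v ∈ e)
  unfold Psi
  rw [hsum, Finset.sum_sub_distrib, ← hcard]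
  push_cast
  ring

lemma diff_nonneg (E : Finset (Finset α)) (v w : α) :
    0 ≤ Wt (degree E w) - Wt (degree (E.filter (fun e => v ∉ e)) w) := by
  have := degree_le_of_subset (Finset.filter_subset (fun e => v ∉ e) E) w
  linarith [Wt_mono this]

lemma drop_ge_basic (E : Finset (Finset α)) (v : α) (hv : v ∈ supp E) :
    (50/3) * (degree E v : ℝ) + Wt (degree E v)
      ≤ Psi E - Psi (E.filter (fun e => v ∉ e)) := by
  rw [psi_drop E v]
  have hterm : Wt (degree E v) - Wt (degree (E.filter (fun e => v ∉ e)) v)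
      = Wt (degree E v) := by
    rw [degree_filter_notMem_self]; simp [Wt]
  have hle : Wt (degree E v) ≤ ∑ w ∈ supp E,
      (Wt (degree E w) - Wt (degree (E.filter (fun e => v ∉ e)) w)) := by
    rw [← hterm]
    exact Finset.single_le_sum (fun w _ => diff_nonneg E v w) hv
  linarith
lemma sum_slots {k : ℕ} {E : Finset (Finset α)} (hU : ∀ e ∈ E, e.card = k)
    {v : α} (hv : v ∈ supp E) :
    ∑ w ∈ (supp E).erase v, degree (E.filter (fun e => v ∈ e)) w
      = k * degree E v - degree E v := by
  have htot : ∑ w ∈ supp E, degree (E.filter (fun e => v ∈ e)) w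
      = k * (E.filter (fun e => v ∈ e)).card := by
    apply sum_degree
    · exact fun e he => hU e (Finset.mem_filter.1 he).1
    · exact fun e he => (subset_supp (Finset.mem_filter.1 he).1)
  rw [← Finset.add_sum_erase _ _ hv, degree_filter_mem_self] at htot
  have hc : (E.filter (fun e => v ∈ e)).card = degree E v := rfl
  rw [hc] at htot
  omega

lemma drop_ge_cap {k : ℕ} {E : Finset (Finset α)} (hU : ∀ e ∈ E, e.card = k)
    {v : α} (hv : v ∈ supp E) {cap : ℕ} (hcap1 : 1 ≤ cap) (hcap4 : cap ≤ 4)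
    (hall : ∀ w ∈ supp E, degree E w ≤ cap) :
    (50/3) * (degree E v : ℝ) + Wt (degree E v)
      + ((k * degree E v - degree E v : ℕ) : ℝ) * (Wt cap - Wt (cap - 1))
      ≤ Psi E - Psi (E.filter (fun e => v ∉ e)) := by
  rw [psi_drop E v]
  have hsplit : ∑ w ∈ supp E,
        (Wt (degree E w) - Wt (degree (E.filter (fun e => v ∉ e)) w))
      = (Wt (degree E v) - Wt (degree (E.filter (fun e => v ∉ e)) v))
        + ∑ w ∈ (supp E).erase v,
          (Wt (degree E w) - Wt (degree (E.filter (fun e => v ∉ e)) w)) :=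
    (Finset.add_sum_erase _ _ hv).symm
  have hvterm : Wt (degree E v) - Wt (degree (E.filter (fun e => v ∉ e)) v)
      = Wt (degree E v) := by rw [degree_filter_notMem_self]; simp [Wt]
  have hslots : ((k * degree E v - degree E v : ℕ) : ℝ) * (Wt cap - Wt (cap - 1))
      ≤ ∑ w ∈ (supp E).erase v,
          (Wt (degree E w) - Wt (degree (E.filter (fun e => v ∉ e)) w)) := by
    rw [← sum_slots hU hv, Nat.cast_sum, Finset.sum_mul]
    apply Finset.sum_le_sum
    intro w hw
    have hwsupp : w ∈ supp E := Finset.mem_erase.1 hw |>.2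
    have hsplitw := degree_split E v w
    have hb : degree (E.filter (fun e => v ∉ e)) w ≤ degree E w := by omega
    have hcast : ((degree (E.filter (fun e => v ∈ e)) w : ℝ))
        = (degree E w : ℝ) - (degree (E.filter (fun e => v ∉ e)) w : ℝ) := by
      push_cast [hsplitw]; ring
    rw [hcast]
    exact marg hcap1 hcap4 (hall w hwsupp) hb
  linarith

lemma drop_ge_cap_special {k : ℕ} {E : Finset (Finset α)} (hU : ∀ e ∈ E, e.card = k)
    {v : α} (hv : v ∈ supp E) {cap : ℕ} (hcap1 : 1 ≤ cap) (hcap4 : cap ≤ 4)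
    (hall : ∀ w ∈ supp E, degree E w ≤ cap)
    {w₀ : α} (hw0 : w₀ ∈ supp E) (hw0v : w₀ ≠ v) (g : ℝ)
    (hsp : ((degree (E.filter (fun e => v ∈ e)) w₀ : ℝ)) * (Wt cap - Wt (cap - 1)) + g
      ≤ Wt (degree E w₀) - Wt (degree (E.filter (fun e => v ∉ e)) w₀)) :
    (50/3) * (degree E v : ℝ) + Wt (degree E v)
      + ((k * degree E v - degree E v : ℕ) : ℝ) * (Wt cap - Wt (cap - 1)) + g
      ≤ Psi E - Psi (E.filter (fun e => v ∉ e)) := by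
  rw [psi_drop E v]
  have hw0e : w₀ ∈ (supp E).erase v := Finset.mem_erase.2 ⟨hw0v, hw0⟩
  have hsplit : ∑ w ∈ supp E,
        (Wt (degree E w) - Wt (degree (E.filter (fun e => v ∉ e)) w))
      = (Wt (degree E v) - Wt (degree (E.filter (fun e => v ∉ e)) v))
        + ∑ w ∈ (supp E).erase v,
          (Wt (degree E w) - Wt (degree (E.filter (fun e => v ∉ e)) w)) :=
    (Finset.add_sum_erase _ _ hv).symm
  have hsplit2 : ∑ w ∈ (supp E).erase v,
        (Wt (degree E w) - Wt (degree (E.filter (fun e => v ∉ e)) w))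
      = (Wt (degree E w₀) - Wt (degree (E.filter (fun e => v ∉ e)) w₀))
        + ∑ w ∈ ((supp E).erase v).erase w₀,
          (Wt (degree E w) - Wt (degree (E.filter (fun e => v ∉ e)) w)) :=
    (Finset.add_sum_erase _ _ hw0e).symm
  have hvterm : Wt (degree E v) - Wt (degree (E.filter (fun e => v ∉ e)) v)
      = Wt (degree E v) := by rw [degree_filter_notMem_self]; simp [Wt]
  have hsum2 : ∑ w ∈ ((supp E).erase v).erase w₀, degree (E.filter (fun e => v ∈ e)) w
      = (k * degree E v - degree E v) - degree (E.filter (fun e => v ∈ e)) w₀ := by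
    have := (Finset.add_sum_erase _ (fun w => degree (E.filter (fun e => v ∈ e)) w) hw0e).symm
    rw [sum_slots hU hv] at this
    omega
  have hslots : (((k * degree E v - degree E v)
        - degree (E.filter (fun e => v ∈ e)) w₀ : ℕ) : ℝ) * (Wt cap - Wt (cap - 1))
      ≤ ∑ w ∈ ((supp E).erase v).erase w₀,
          (Wt (degree E w) - Wt (degree (E.filter (fun e => v ∉ e)) w)) := by
    rw [← hsum2, Nat.cast_sum, Finset.sum_mul]
    apply Finset.sum_le_sum
    intro w hw
    have hwsupp : w ∈ supp E := Finset.mem_erase.1 (Finset.mem_erase.1 hw |>.2) |>.2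
    have hsplitw := degree_split E v w
    have hb : degree (E.filter (fun e => v ∉ e)) w ≤ degree E w := by omega
    have hcast : ((degree (E.filter (fun e => v ∈ e)) w : ℝ))
        = (degree E w : ℝ) - (degree (E.filter (fun e => v ∉ e)) w : ℝ) := by
      push_cast [hsplitw]; ring
    rw [hcast]
    exact marg hcap1 hcap4 (hall w hwsupp) hb
  have hle : degree (E.filter (fun e => v ∈ e)) w₀ ≤ k * degree E v - degree E v := by
    have := (Finset.add_sum_erase _ (fun w => degree (E.filter (fun e => v ∈ e)) w) hw0e).symm
    rw [sum_slots hU hv] at this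
    omega
  have hcast2 : (((k * degree E v - degree E v)
        - degree (E.filter (fun e => v ∈ e)) w₀ : ℕ) : ℝ)
      = ((k * degree E v - degree E v : ℕ) : ℝ)
        - (degree (E.filter (fun e => v ∈ e)) w₀ : ℝ) := by
    push_cast [Nat.cast_sub hle]
    ring
  rw [hcast2] at hslots
  linarith
lemma hard_case {E : Finset (Finset α)} (hU : ∀ e ∈ E, e.card = 9) {v : α} (hv : v ∈ supp E)
    {d : ℕ} (hd : d = 3 ∨ d = 4) (hdeg : degree E v = d)
    (hall : ∀ w ∈ supp E, degree E w ≤ d) :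
    (∃ v', v' ∈ supp E ∧ (100:ℝ) ≤ Psi E - Psi (E.filter (fun e => v' ∉ e))) ∨
    (∃ v' u, v' ∈ supp E ∧ u ∈ supp (E.filter (fun e => v' ∉ e)) ∧
      (200:ℝ) ≤ Psi E - Psi ((E.filter (fun e => v' ∉ e)).filter (fun e => u ∉ e))) := by
  have hd1 : 1 ≤ d := by omega
  have hd4 : d ≤ 4 := by omega
  by_cases hA : ∀ w ∈ supp E, degree E w = d → ∀ z ∈ supp E, z ≠ w →
      1 ≤ degree (E.filter (fun e => w ∈ e)) z →
      (degree E z = d ∧ degree (E.filter (fun e => w ∈ e)) z = 1)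
  swap
  · -- some degree-d vertex has a "rich" slot: one-step with reserve
    left
    push_neg at hA
    obtain ⟨w, hw, hwd, z, hz, hzw, hT, hbad⟩ := hA
    refine ⟨w, hw, ?_⟩
    have hsplitz := degree_split E w z
    have hb : degree (E.filter (fun e => w ∉ e)) z < degree E z := by omega
    have hxz : ¬(degree E z = d ∧ degree (E.filter (fun e => w ∉ e)) z + 1 = d) := by
      rintro ⟨h1, h2⟩
      exact hbad h1 (by omega)
    have hres := marg_res hd (hall z hz) hb hxz
    have hsp : ((degree (E.filter (fun e => w ∈ e)) z : ℝ)) * (Wt d - Wt (d-1))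
        + ((Wt (d - 1) - Wt (d - 2)) - (Wt d - Wt (d - 1)))
        ≤ Wt (degree E z) - Wt (degree (E.filter (fun e => w ∉ e)) z) := by
      have hcast : ((degree (E.filter (fun e => w ∈ e)) z : ℝ))
          = (degree E z : ℝ) - (degree (E.filter (fun e => w ∉ e)) z : ℝ) := by
        push_cast [hsplitz]; ring
      rw [hcast]; exact hres
    have hdrop := drop_ge_cap_special hU hw hd1 hd4 hall hz hzw _ hsp
    rw [hwd] at hdrop
    rcases hd with rfl | rfl <;>
      · norm_num [Wt] at hdrop ⊢
        linarith
  · -- every degree-d vertex has only "plain" slots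
    set Ev := E.filter (fun e => v ∈ e) with hEvdef
    set E' := E.filter (fun e => v ∉ e) with hE'def
    set C := ((supp E).erase v).filter (fun z => 1 ≤ degree Ev z) with hCdef
    have hCfact : ∀ z ∈ C, degree E z = d ∧ degree Ev z = 1 ∧ degree E' z = d - 1 := by
      intro z hzC
      obtain ⟨hze, hz1⟩ := Finset.mem_filter.1 hzC
      obtain ⟨hzv, hzs⟩ := Finset.mem_erase.1 hze
      obtain ⟨h1, h2⟩ := hA v hv hdeg z hzs hzv hz1
      have h2' : degree Ev z = 1 := h2
      refine ⟨h1, h2', ?_⟩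
      have h3 := degree_split E v z
      rw [← hEvdef, ← hE'def] at h3
      omega
    have hCsum : ∑ z ∈ (supp E).erase v, degree Ev z = 8 * d := by
      rw [hEvdef, sum_slots hU hv, hdeg]; omega
    have hCcard : C.card = 8 * d := by
      have h1 : ∑ z ∈ (supp E).erase v, degree Ev z = ∑ z ∈ C, degree Ev z := by
        symm
        apply Finset.sum_subset (Finset.filter_subset _ _)
        intro z hzz hnz
        have h0 : ¬ 1 ≤ degree Ev z := fun hcon => hnz (Finset.mem_filter.2 ⟨hzz, hcon⟩)
        omega
      have h2 : ∑ z ∈ C, degree Ev z = ∑ _z ∈ C, 1 :=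
        Finset.sum_congr rfl (fun z hz => (hCfact z hz).2.1)
      rw [h1, h2, Finset.sum_const, smul_eq_mul, mul_one] at hCsum
      exact hCsum
    by_cases hB : ∃ u ∈ supp E, degree E' u = d ∧
        ∃ w₀ ∈ C, 1 ≤ degree (E'.filter (fun e => u ∈ e)) w₀
    · -- two-step
      right
      obtain ⟨u, hu, hud, w₀, hw₀C, hw₀T⟩ := hB
      have hU' : ∀ e ∈ E', e.card = 9 := fun e he => hU e (Finset.mem_filter.1 he).1
      have huE' : u ∈ supp E' := degree_pos_iff.1 (by omega)
      refine ⟨v, u, hv, huE', ?_⟩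
      obtain ⟨hw₀d, hw₀Ev, hw₀E'⟩ := hCfact w₀ hw₀C
      have hw₀E'supp : w₀ ∈ supp E' := degree_pos_iff.1 (by omega)
      have hw₀u : w₀ ≠ u := by intro h; rw [h] at hw₀E'; omega
      have hallE' : ∀ w ∈ supp E', degree E' w ≤ d := fun w hw =>
        le_trans (degree_le_of_subset (Finset.filter_subset _ _) w)
          (hall w (supp_filter_subset E _ hw))
      have hdrop1 := drop_ge_cap hU hv hd1 hd4 hall
      rw [hdeg] at hdrop1
      have hsplitw := degree_split E' u w₀
      have hbw : degree (E'.filter (fun e => u ∉ e)) w₀ < degree E' w₀ := by omega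
      have hxw : ¬(degree E' w₀ = d ∧ degree (E'.filter (fun e => u ∉ e)) w₀ + 1 = d) := by
        rintro ⟨h1, -⟩; omega
      have hres := marg_res hd (by omega : degree E' w₀ ≤ d) hbw hxw
      have hsp : ((degree (E'.filter (fun e => u ∈ e)) w₀ : ℝ)) * (Wt d - Wt (d-1))
          + ((Wt (d - 1) - Wt (d - 2)) - (Wt d - Wt (d - 1)))
          ≤ Wt (degree E' w₀) - Wt (degree (E'.filter (fun e => u ∉ e)) w₀) := by
        have hcast : ((degree (E'.filter (fun e => u ∈ e)) w₀ : ℝ))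
            = (degree E' w₀ : ℝ) - (degree (E'.filter (fun e => u ∉ e)) w₀ : ℝ) := by
          push_cast [hsplitw]; ring
        rw [hcast]; exact hres
      have hdrop2 := drop_ge_cap_special hU' huE' hd1 hd4 hallE' hw₀E'supp hw₀u _ hsp
      rw [hud] at hdrop2
      have hsum : Psi E - Psi (E'.filter (fun e => u ∉ e))
          = (Psi E - Psi E') + (Psi E' - Psi (E'.filter (fun e => u ∉ e))) := by ring
      rw [hsum]
      rcases hd with rfl | rfl <;>
        · norm_num [Wt] at hdrop1 hdrop2 ⊢
          linarith
    · -- closure: impossible by counting mod 9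
      exfalso
      push_neg at hB
      have hU' : ∀ e ∈ E', e.card = 9 := fun e he => hU e (Finset.mem_filter.1 he).1
      set M := E'.filter (fun f => (f ∩ C).Nonempty) with hMdef
      have hsubC : ∀ f ∈ M, f ⊆ C := by
        intro f hf z hzf
        obtain ⟨hfE', hfC⟩ := Finset.mem_filter.1 hf
        obtain ⟨w, hwfC⟩ := hfC
        obtain ⟨hwf, hwC⟩ := Finset.mem_inter.1 hwfC
        have hfE : f ∈ E := (Finset.mem_filter.1 hfE').1
        have hvnf : v ∉ f := (Finset.mem_filter.1 hfE').2
        have hzs : z ∈ supp E := subset_supp hfE hzf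
        have hzv : z ≠ v := fun h => hvnf (h ▸ hzf)
        by_contra hzC
        have hzEv : degree Ev z = 0 := by
          by_contra h0
          exact hzC (Finset.mem_filter.2 ⟨Finset.mem_erase.2 ⟨hzv, hzs⟩, by omega⟩)
        have hzE' : degree E' z = degree E z := by
          have := degree_split E v z
          rw [← hEvdef, ← hE'def] at this
          omega
        have hzw : z ≠ w := fun h => hzC (h ▸ hwC)
        obtain ⟨hwd, -, -⟩ := hCfact w hwC
        have hws : w ∈ supp E :=
          (Finset.mem_erase.1 (Finset.mem_filter.1 hwC).1).2
        have hTz : 1 ≤ degree (E.filter (fun e => w ∈ e)) z := by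
          refine Finset.card_pos.2 ⟨f, ?_⟩
          simp only [Finset.mem_filter]
          exact ⟨⟨hfE, hwf⟩, hzf⟩
        have hzd := (hA w hws hwd z hzs hzw hTz).1
        have hTw : 1 ≤ degree (E'.filter (fun e => z ∈ e)) w := by
          refine Finset.card_pos.2 ⟨f, ?_⟩
          simp only [Finset.mem_filter]
          exact ⟨⟨hfE', hzf⟩, hwf⟩
        exact absurd hTw (by simpa using hB z hzs (by omega) w hwC)
      have hcount : ∑ z ∈ C, degree E' z = 9 * M.card := by
        have h1 : ∀ z ∈ C, degree E' z = ∑ f ∈ E', if z ∈ f then 1 else 0 := by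
          intro z _
          rw [Finset.sum_boole, Nat.cast_id]
          rfl
        rw [Finset.sum_congr rfl h1, Finset.sum_comm]
        have h2 : ∀ f ∈ E', (∑ z ∈ C, if z ∈ f then 1 else 0)
            = if (f ∩ C).Nonempty then 9 else 0 := by
          intro f hf
          rw [Finset.sum_boole, Nat.cast_id, Finset.filter_mem_eq_inter]
          by_cases hne : (f ∩ C).Nonempty
          · rw [if_pos hne]
            have hfM : f ∈ M := Finset.mem_filter.2 ⟨hf, hne⟩
            rw [Finset.inter_eq_right.2 (hsubC f hfM)]
            exact hU' f hf
          · rw [if_neg hne]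
            rw [Finset.not_nonempty_iff_eq_empty] at hne
            rw [Finset.inter_comm, hne, Finset.card_empty]
        rw [Finset.sum_congr rfl h2, Finset.sum_ite, Finset.sum_const, Finset.sum_const,
          smul_eq_mul, smul_eq_mul, mul_zero, add_zero, mul_comm]
      have hval : ∑ z ∈ C, degree E' z = (8 * d) * (d - 1) := by
        have := Finset.sum_congr rfl (fun z hz => (hCfact z hz).2.2)
        rw [this, Finset.sum_const, smul_eq_mul, hCcard]
      rw [hval] at hcount
      rcases hd with rfl | rfl <;> omega
lemma card_filter_lt {E : Finset (Finset α)} {v : α} (hv : v ∈ supp E) :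
    (E.filter (fun e => v ∉ e)).card < E.card := by
  obtain ⟨e, he, hve⟩ := mem_supp.1 hv
  refine Finset.card_lt_card ⟨Finset.filter_subset _ _, fun hsub => ?_⟩
  exact (Finset.mem_filter.1 (hsub he)).2 hve

lemma key {k : ℕ} (hk : 9 ≤ k) :
    ∀ (n : ℕ) (E : Finset (Finset α)), E.card = n → (∀ e ∈ E, e.card = k) →
      100 * (tau E : ℝ) ≤ Psi E := by
  intro n
  induction n using Nat.strong_induction_on with
  | _ n IH =>
  intro E hcard hU
  rcases Finset.eq_empty_or_nonempty E with rfl | hEne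
  · rw [tau_empty]; simp [Psi, supp]
  have hene : ∀ e ∈ E, e.Nonempty := fun e he => Finset.card_pos.1 (by rw [hU e he]; omega)
  obtain ⟨e₀, he₀⟩ := hEne
  obtain ⟨x₀, hx₀⟩ := hene e₀ he₀
  have hsuppne : (supp E).Nonempty := ⟨x₀, subset_supp he₀ hx₀⟩
  obtain ⟨v, hv, hvmax⟩ := Finset.exists_max_image (supp E) (degree E) hsuppne
  have hδ1 : 1 ≤ degree E v := degree_pos_iff.2 hv
  -- one-step gluing
  have onestep : ∀ v' : α, v' ∈ supp E →
      (100 : ℝ) ≤ Psi E - Psi (E.filter (fun e => v' ∉ e)) →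
      100 * (tau E : ℝ) ≤ Psi E := by
    intro v' hv' hdrop
    have hlt := card_filter_lt hv'
    have hIH := IH _ (hcard ▸ hlt) (E.filter (fun e => v' ∉ e)) rfl
      (fun e he => hU e (Finset.mem_filter.1 he).1)
    have hτ : (tau E : ℝ) ≤ (tau (E.filter (fun e => v' ∉ e)) : ℝ) + 1 := by
      exact_mod_cast tau_step hene v'
    linarith
  -- two-step gluing
  have twostep : ∀ v' u : α, v' ∈ supp E →
      u ∈ supp (E.filter (fun e => v' ∉ e)) →
      (200 : ℝ) ≤ Psi E - Psi ((E.filter (fun e => v' ∉ e)).filter (fun e => u ∉ e)) →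
      100 * (tau E : ℝ) ≤ Psi E := by
    intro v' u hv' hu hdrop
    set E' := E.filter (fun e => v' ∉ e) with hE'
    set E'' := E'.filter (fun e => u ∉ e) with hE''
    have hlt1 : E'.card < n := hcard ▸ card_filter_lt hv'
    have hlt2 : E''.card < E'.card := card_filter_lt hu
    have hU' : ∀ e ∈ E', e.card = k := fun e he => hU e (Finset.mem_filter.1 he).1
    have hU'' : ∀ e ∈ E'', e.card = k := fun e he => hU' e (Finset.mem_filter.1 he).1
    have hene' : ∀ e ∈ E', e.Nonempty := fun e he => hene e (Finset.mem_filter.1 he).1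
    have hIH := IH E''.card (by omega) E'' rfl hU''
    have hτ1 : (tau E : ℝ) ≤ (tau E' : ℝ) + 1 := by exact_mod_cast tau_step hene v'
    have hτ2 : (tau E' : ℝ) ≤ (tau E'' : ℝ) + 1 := by exact_mod_cast tau_step hene' u
    linarith
  -- case analysis on the maximum degree
  rcases le_or_gt 5 (degree E v) with h5 | h4
  · -- max degree at least 5
    apply onestep v hv
    have hbasic := drop_ge_basic E v hv
    have hW : Wt (degree E v) = 50/3 := Wt_of_ge4 (by omega)
    have hcast : (5:ℝ) ≤ (degree E v : ℝ) := by exact_mod_cast h5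
    rw [hW] at hbasic
    linarith
  · have hall' : ∀ w ∈ supp E, degree E w ≤ degree E v := hvmax
    have hcases : degree E v = 1 ∨ degree E v = 2 ∨ degree E v = 3 ∨ degree E v = 4 := by
      omega
    rcases hcases with h | h | h | h
    · -- degree 1
      apply onestep v hv
      have hdr := drop_ge_cap hU hv (cap := 1) le_rfl (by norm_num)
        (fun w hw => h ▸ hall' w hw)
      rw [h] at hdr
      have hslot : (8:ℝ) ≤ ((k * 1 - 1 : ℕ) : ℝ) := by
        exact_mod_cast (by omega : 8 ≤ k * 1 - 1)
      have hpos : (0:ℝ) ≤ Wt 1 - Wt 0 := by norm_num [Wt]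
      have hmul := mul_le_mul_of_nonneg_right hslot hpos
      norm_num [Wt] at hdr hmul
      linarith
    · -- degree 2
      apply onestep v hv
      have hdr := drop_ge_cap hU hv (cap := 2) (by norm_num) (by norm_num)
        (fun w hw => h ▸ hall' w hw)
      rw [h] at hdr
      have hslot : (16:ℝ) ≤ ((k * 2 - 2 : ℕ) : ℝ) := by
        exact_mod_cast (by omega : 16 ≤ k * 2 - 2)
      have hpos : (0:ℝ) ≤ Wt 2 - Wt 1 := by norm_num [Wt]
      have hmul := mul_le_mul_of_nonneg_right hslot hpos
      norm_num [Wt] at hdr hmul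
      linarith
    · -- degree 3
      rcases le_or_gt 10 k with hk10 | hk9
      · apply onestep v hv
        have hdr := drop_ge_cap hU hv (cap := 3) (by norm_num) (by norm_num)
          (fun w hw => h ▸ hall' w hw)
        rw [h] at hdr
        have hslot : (27:ℝ) ≤ ((k * 3 - 3 : ℕ) : ℝ) := by
          exact_mod_cast (by omega : 27 ≤ k * 3 - 3)
        have hpos : (0:ℝ) ≤ Wt 3 - Wt 2 := by norm_num [Wt]
        have hmul := mul_le_mul_of_nonneg_right hslot hpos
        norm_num [Wt] at hdr hmul
        linarith
      · have hk9' : k = 9 := by omega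
        subst hk9'
        rcases hard_case hU hv (Or.inl rfl) h (fun w hw => h ▸ hall' w hw) with
          ⟨v', hv', hdrop⟩ | ⟨v', u, hv', hu, hdrop⟩
        · exact onestep v' hv' hdrop
        · exact twostep v' u hv' hu hdrop
    · -- degree 4
      rcases le_or_gt 10 k with hk10 | hk9
      · apply onestep v hv
        have hdr := drop_ge_cap hU hv (cap := 4) (by norm_num) (by norm_num)
          (fun w hw => h ▸ hall' w hw)
        rw [h] at hdr
        have hslot : (36:ℝ) ≤ ((k * 4 - 4 : ℕ) : ℝ) := by
          exact_mod_cast (by omega : 36 ≤ k * 4 - 4)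
        have hpos : (0:ℝ) ≤ Wt 4 - Wt 3 := by norm_num [Wt]
        have hmul := mul_le_mul_of_nonneg_right hslot hpos
        norm_num [Wt] at hdr hmul
        linarith
      · have hk9' : k = 9 := by omega
        subst hk9'
        rcases hard_case hU hv (Or.inr rfl) h (fun w hw => h ▸ hall' w hw) with
          ⟨v', hv', hdrop⟩ | ⟨v', u, hv', hu, hdrop⟩
        · exact onestep v' hv' hdrop
        · exact twostep v' u hv' hu hdrop
lemma filter_count_eq (V : Finset α) (E : Finset (Finset α)) (hVE : ∀ e ∈ E, e ⊆ V)
    (p : ℕ → Prop) [DecidablePred p] (hp : ¬ p 0) :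
    V.filter (fun v => p (degree E v)) = (supp E).filter (fun v => p (degree E v)) := by
  ext x
  simp only [Finset.mem_filter]
  constructor
  · rintro ⟨hxV, hpx⟩
    refine ⟨?_, hpx⟩
    by_contra hxs
    rw [degree_eq_zero_of_notMem_supp hxs] at hpx
    exact hp hpx
  · rintro ⟨hxs, hpx⟩
    obtain ⟨e, he, hxe⟩ := mem_supp.1 hxs
    exact ⟨hVE e he hxe, hpx⟩

lemma psi_eq (E : Finset (Finset α)) :
    Psi E = 9.5976 * ((supp E).filter (fun v => degree E v = 1)).card
      + 14.8298 * ((supp E).filter (fun v => degree E v = 2)).card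
      + 16.1586 * ((supp E).filter (fun v => degree E v = 3)).card
      + (50/3) * ((supp E).filter (fun v => 4 ≤ degree E v)).card
      + (50/3) * E.card := by
  unfold Psi
  have hptw : ∀ v ∈ supp E, Wt (degree E v) =
      (if degree E v = 1 then (9.5976:ℝ) else 0)
      + (if degree E v = 2 then (14.8298:ℝ) else 0)
      + (if degree E v = 3 then (16.1586:ℝ) else 0)
      + (if 4 ≤ degree E v then (50/3:ℝ) else 0) := by
    intro v hv
    have h1 : 1 ≤ degree E v := degree_pos_iff.2 hv
    rcases le_or_gt 4 (degree E v) with h4 | h4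
    · rw [Wt_of_ge4 h4, if_pos h4, if_neg (by omega), if_neg (by omega), if_neg (by omega)]
      ring
    · have : degree E v = 1 ∨ degree E v = 2 ∨ degree E v = 3 := by omega
      rcases this with h | h | h <;> rw [h] <;> norm_num [Wt]
  rw [Finset.sum_congr rfl hptw]
  rw [Finset.sum_add_distrib, Finset.sum_add_distrib, Finset.sum_add_distrib]
  rw [← Finset.sum_filter, ← Finset.sum_filter, ← Finset.sum_filter, ← Finset.sum_filter]
  simp only [Finset.sum_const, nsmul_eq_mul]
  ring

theorem stmt_3 (k : ℕ) (hk9 : 9 ≤ k) (hk17 : k ≤ 17)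
    (V : Finset α) (E : Finset (Finset α))
    (hVE : ∀ e ∈ E, e ⊆ V) (huniform : ∀ e ∈ E, e.card = k) :
    100 * (tau E : ℝ) ≤
      9.5976 * (V.filter (fun v => degree E v = 1)).card +
      14.8298 * (V.filter (fun v => degree E v = 2)).card +
      16.1586 * (V.filter (fun v => degree E v = 3)).card +
      (50 / 3) * (V.filter (fun v => 4 ≤ degree E v)).card +
      (50 / 3) * E.card := by
  have hkey := key hk9 E.card E rfl huniform
  have h1 := filter_count_eq V E hVE (fun n => n = 1) (by omega)
  have h2 := filter_count_eq V E hVE (fun n => n = 2) (by omega)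
  have h3 := filter_count_eq V E hVE (fun n => n = 3) (by omega)
  have h4 := filter_count_eq V E hVE (fun n => 4 ≤ n) (by omega)
  rw [psi_eq] at hkey
  rw [h1, h2, h3, h4]
  convert hkey using 2 <;> norm_num
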